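/- Every closed linear λ-term M has a ground type: there exists a ground type A such that ⊢ M : A is derivable in IMLL₂. -/

import Mathlib

/-!
Core development: untyped λ-terms in de Bruijn representation, linearity,
β- and η-reduction, as in the paper "A type-assignment of linear erasure
and duplication" (Curzi, Roversi).
-/

namespace LEMPaper

/-- Untyped λ-terms, de Bruijn representation. -/
inductive Lam : Type
  | var : ℕ → Lam
  | app : Lam → Lam → Lam
  | lam : Lam → Lam
  deriving DecidableEq

namespace Lam

/-- Lift a renaming under a binder. -/
def liftRen (ρ : ℕ → ℕ) : ℕ → ℕ
  | 0 => 0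
  | n + 1 => ρ n + 1

/-- Apply a renaming of free variables. -/
def rename (ρ : ℕ → ℕ) : Lam → Lam
  | var n => var (ρ n)
  | app M N => app (M.rename ρ) (N.rename ρ)
  | lam M => lam (M.rename (liftRen ρ))

/-- Shift all free variables up by one. -/
def shift (M : Lam) : Lam := M.rename Nat.succ

/-- Lift a simultaneous substitution under a binder. -/
def liftSub (s : ℕ → Lam) : ℕ → Lam
  | 0 => var 0
  | n + 1 => (s n).shift

/-- Simultaneous (capture-avoiding) substitution. -/
def substAll (s : ℕ → Lam) : Lam → Lam
  | var n => s n
  | app M N => app (M.substAll s) (N.substAll s)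
  | lam M => lam (M.substAll (liftSub s))

/-- Capture-avoiding substitution `M[N/n]`; the variables above `n` are decremented. -/
def subst (M : Lam) (n : ℕ) (N : Lam) : Lam :=
  M.substAll (fun m => if m < n then var m else if m = n then N else var (m - 1))

/-- Number of (free) occurrences of the variable `n` in a term. -/
def countFree : Lam → ℕ → ℕ
  | var m, n => if m = n then 1 else 0
  | app M N, n => M.countFree n + N.countFree n
  | lam M, n => M.countFree (n + 1)

/-- A term is closed when it has no free variables. -/
def Closed (M : Lam) : Prop := ∀ n, M.countFree n = 0

/-- A λ-term is linear if all of its free variables occur exactly once in it and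
every abstraction binds a variable occurring exactly once in its (linear) body. -/
def Linear : Lam → Prop
  | var _ => True
  | app M N => M.Linear ∧ N.Linear ∧ ∀ n, M.countFree n = 0 ∨ N.countFree n = 0
  | lam M => M.Linear ∧ M.countFree 0 = 1

/-- The identity combinator `I = λx.x`. -/
def I : Lam := lam (var 0)

/-- The linear pairing `⟨M,N⟩ = λz. z M N`. -/
def pair (M N : Lam) : Lam := lam (app (app (var 0) M.shift) N.shift)

/-- The size (number of nodes of the syntax tree) of a term. -/
def size : Lam → ℕ
  | var _ => 1
  | app M N => M.size + N.size + 1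
  | lam M => M.size + 1

/-- One-step β-reduction, closed under arbitrary contexts. -/
inductive Beta : Lam → Lam → Prop
  | beta (M N : Lam) : Beta (app (lam M) N) (M.subst 0 N)
  | appL {M M'} (N : Lam) : Beta M M' → Beta (app M N) (app M' N)
  | appR (M : Lam) {N N'} : Beta N N' → Beta (app M N) (app M N')
  | lam {M M'} : Beta M M' → Beta (lam M) (lam M')

/-- One-step η-reduction `λx.Mx →η M` (x not free in M), closed under contexts. -/
inductive Eta : Lam → Lam → Prop
  | eta (M : Lam) : Eta (lam (app M.shift (var 0))) M
  | appL {M M'} (N : Lam) : Eta M M' → Eta (app M N) (app M' N)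
  | appR (M : Lam) {N N'} : Eta N N' → Eta (app M N) (app M N')
  | lam {M M'} : Eta M M' → Eta (lam M) (lam M')

/-- One-step βη-reduction. -/
def BetaEta (M N : Lam) : Prop := Beta M N ∨ Eta M N

/-- A value is a closed linear λ-term in β-normal form. -/
def IsValue (V : Lam) : Prop := V.Linear ∧ V.Closed ∧ ∀ W, ¬ Beta V W

end Lam

end LEMPaper

namespace LEMPaper

/-- Types of second-order intuitionistic multiplicative linear logic `IMLL₂`:
`A ::= α | A ⊸ B | ∀α.A` (type variables in de Bruijn representation). -/
inductive Ty : Type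
  | var : ℕ → Ty
  | arr : Ty → Ty → Ty
  | all : Ty → Ty
  deriving DecidableEq

namespace Ty

def liftRen (ρ : ℕ → ℕ) : ℕ → ℕ
  | 0 => 0
  | n + 1 => ρ n + 1

def rename (ρ : ℕ → ℕ) : Ty → Ty
  | var n => var (ρ n)
  | arr A B => arr (A.rename ρ) (B.rename ρ)
  | all A => all (A.rename (liftRen ρ))

/-- Shift all free type variables up by one. -/
def shift (A : Ty) : Ty := A.rename Nat.succ

def liftSub (s : ℕ → Ty) : ℕ → Ty
  | 0 => var 0
  | n + 1 => (s n).shift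

def substAll (s : ℕ → Ty) : Ty → Ty
  | var n => s n
  | arr A B => arr (A.substAll s) (B.substAll s)
  | all A => all (A.substAll (liftSub s))

/-- `A.instTop B` instantiates the outermost bound type variable of `A` with `B`
(i.e. `A⟨B/α⟩` where `α` is the variable bound by an enclosing `∀`). -/
def instTop (A B : Ty) : Ty :=
  A.substAll (fun n => match n with | 0 => B | m + 1 => var m)

/-- All free type variables are `< d`. -/
def ClosedAt : Ty → ℕ → Prop
  | var n, d => n < d
  | arr A B, d => A.ClosedAt d ∧ B.ClosedAt d
  | all A, d => A.ClosedAt (d + 1)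

/-- A type is closed when it has no free type variables. -/
def Closed (A : Ty) : Prop := A.ClosedAt 0

/-- `isPiSigma A true` means `A` is a `Π₁`-type, `isPiSigma A false` that `A` is a
`Σ₁`-type, following the mutual grammar
`Π₁ ::= α | Σ₁ ⊸ Π₁ | ∀α.Π₁` and `Σ₁ ::= α | Π₁ ⊸ Σ₁`. -/
def isPiSigma : Ty → Bool → Prop
  | var _, _ => True
  | arr A B, b => A.isPiSigma (!b) ∧ B.isPiSigma b
  | all A, b => b = true ∧ A.isPiSigma true

/-- A ground type is a closed `Π₁`-type. -/
def Ground (A : Ty) : Prop := A.isPiSigma true ∧ A.Closed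

/-- The unity type `1 = ∀α.(α ⊸ α)`. -/
def one : Ty := all (arr (var 0) (var 0))

/-- The tensor product `A ⊗ B = ∀α.(A ⊸ B ⊸ α) ⊸ α`. -/
def tensor (A B : Ty) : Ty :=
  all (arr (arr A.shift (arr B.shift (var 0))) (var 0))

end Ty

/-- Typing contexts for the linear λ-calculus: position `i` records the type of the
de Bruijn variable `i` (`none` meaning that the variable is not available). -/
abbrev Ctx := List (Option Ty)

/-- Splitting of a linear context into two disjoint parts. -/
inductive Split : Ctx → Ctx → Ctx → Prop
  | nil : Split [] [] []
  | left {Γ Γ₁ Γ₂ A} : Split Γ Γ₁ Γ₂ → Split (some A :: Γ) (some A :: Γ₁) (none :: Γ₂)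
  | right {Γ Γ₁ Γ₂ A} : Split Γ Γ₁ Γ₂ → Split (some A :: Γ) (none :: Γ₁) (some A :: Γ₂)
  | skip {Γ Γ₁ Γ₂} : Split Γ Γ₁ Γ₂ → Split (none :: Γ) (none :: Γ₁) (none :: Γ₂)

/-- The context contains exactly one (available) assumption, of type `A`, at `n`. -/
def OnlyAt (Γ : Ctx) (n : ℕ) (A : Ty) : Prop :=
  Γ[n]? = some (some A) ∧ ∀ m, m ≠ n → ∀ B, Γ[m]? ≠ some (some B)

/-- Type assignment of `IMLL₂` for the linear λ-calculus: variables are used exactly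
once (ax and the context splitting of the application rule enforce linearity),
plus the second-order rules for `∀` (with the usual eigenvariable condition,
rendered by shifting the context in `allI`). -/
inductive HasTy : Ctx → Lam → Ty → Prop
  | var {Γ n A} : OnlyAt Γ n A → HasTy Γ (.var n) A
  | lam {Γ M A B} : HasTy (some A :: Γ) M B → HasTy Γ (.lam M) (A.arr B)
  | app {Γ Γ₁ Γ₂ M N A B} : Split Γ Γ₁ Γ₂ →
      HasTy Γ₁ M (A.arr B) → HasTy Γ₂ N A → HasTy Γ (.app M N) B
  | allI {Γ M A} : HasTy (Γ.map (Option.map Ty.shift)) M A → HasTy Γ M (.all A)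
  | allE {Γ M A} (B : Ty) : HasTy Γ M (.all A) → HasTy Γ M (A.instTop B)

end LEMPaper

namespace LEMPaper
namespace Lam

@[simp] theorem size_pos (M : Lam) : 0 < M.size := by
  cases M <;> simp [size]

theorem liftRen_comp (ρ₁ ρ₂ : ℕ → ℕ) : liftRen (ρ₂ ∘ ρ₁) = liftRen ρ₂ ∘ liftRen ρ₁ := by
  funext m; cases m <;> simp [liftRen]

theorem rename_rename (M : Lam) : ∀ ρ₁ ρ₂, (M.rename ρ₁).rename ρ₂ = M.rename (ρ₂ ∘ ρ₁) := by
  induction M with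
  | var n => intro ρ₁ ρ₂; rfl
  | app M N ihM ihN => intro ρ₁ ρ₂; simp [rename, ihM, ihN]
  | lam M ih => intro ρ₁ ρ₂; simp [rename, ih, liftRen_comp]

theorem rename_congr (M : Lam) :
    ∀ ρ₁ ρ₂, (∀ k, M.countFree k ≠ 0 → ρ₁ k = ρ₂ k) → M.rename ρ₁ = M.rename ρ₂ := by
  induction M with
  | var n =>
      intro ρ₁ ρ₂ h
      simp only [rename]
      rw [h n (by simp [countFree])]
  | app M N ihM ihN =>
      intro ρ₁ ρ₂ h
      simp only [rename]
      rw [ihM _ _ fun k hk => h k (by simp [countFree]; omega),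
        ihN _ _ fun k hk => h k (by simp [countFree]; omega)]
  | lam M ih =>
      intro ρ₁ ρ₂ h
      simp only [rename]
      rw [ih (liftRen ρ₁) (liftRen ρ₂) ?_]
      intro k hk
      cases k with
      | zero => rfl
      | succ k => simp only [liftRen]; rw [h k (by simpa [countFree] using hk)]

theorem liftRen_id : liftRen id = id := by
  funext m; cases m <;> simp [liftRen]

theorem rename_id (M : Lam) : M.rename id = M := by
  induction M with
  | var n => rfl
  | app M N ihM ihN => simp [rename, ihM, ihN]
  | lam M ih => simp [rename, liftRen_id, ih]

theorem size_rename (M : Lam) : ∀ ρ, (M.rename ρ).size = M.size := by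
  induction M with
  | var n => intro ρ; rfl
  | app M N ihM ihN => intro ρ; simp [rename, size, ihM, ihN]
  | lam M ih => intro ρ; simp [rename, size, ih]

theorem liftRen_inj {ρ : ℕ → ℕ} (h : Function.Injective ρ) : Function.Injective (liftRen ρ) := by
  intro a b hab
  cases a <;> cases b <;> simp [liftRen] at hab <;> simp_all
  exact h hab

theorem countFree_rename_inj (M : Lam) :
    ∀ ρ, Function.Injective ρ → ∀ m, (M.rename ρ).countFree (ρ m) = M.countFree m := by
  induction M with
  | var n =>
      intro ρ hρ m
      simp only [rename, countFree]
      by_cases h : n = m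
      · simp [h]
      · rw [if_neg (fun hc => h (hρ hc)), if_neg h]
  | app M N ihM ihN => intro ρ hρ m; simp [rename, countFree, ihM ρ hρ m, ihN ρ hρ m]
  | lam M ih =>
      intro ρ hρ m
      simp only [rename, countFree]
      have : ρ m + 1 = liftRen ρ (m + 1) := rfl
      rw [this, ih _ (liftRen_inj hρ) (m + 1)]

theorem countFree_rename_out (M : Lam) :
    ∀ ρ n, (∀ m, ρ m ≠ n) → (M.rename ρ).countFree n = 0 := by
  induction M with
  | var k => intro ρ n h; simp [rename, countFree, h k]
  | app M N ihM ihN => intro ρ n h; simp [rename, countFree, ihM ρ n h, ihN ρ n h]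
  | lam M ih =>
      intro ρ n h
      simp only [rename, countFree]
      apply ih
      intro m
      cases m with
      | zero => simp [liftRen]
      | succ m => simp only [liftRen]; have := h m; omega

@[simp] theorem countFree_shift_zero (M : Lam) : M.shift.countFree 0 = 0 :=
  countFree_rename_out M _ _ (fun m => Nat.succ_ne_zero m)

@[simp] theorem countFree_shift_succ (M : Lam) (n : ℕ) :
    M.shift.countFree (n + 1) = M.countFree n :=
  countFree_rename_inj M _ (fun _ _ h => Nat.succ_injective h) n

@[simp] theorem size_shift (M : Lam) : M.shift.size = M.size := size_rename M _

/-- The substitution map used by `subst`. -/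
def sMap (n : ℕ) (N : Lam) : ℕ → Lam :=
  fun m => if m < n then var m else if m = n then N else var (m - 1)

theorem subst_eq (M : Lam) (n : ℕ) (N : Lam) : M.subst n N = M.substAll (sMap n N) := rfl

theorem liftSub_sMap (n : ℕ) (N : Lam) : liftSub (sMap n N) = sMap (n + 1) N.shift := by
  funext m
  cases m with
  | zero => simp [liftSub, sMap]
  | succ m =>
      simp only [liftSub, sMap]
      by_cases h1 : m < n
      · simp [h1, shift, rename, Nat.lt_succ_of_lt h1, show m + 1 < n + 1 by omega]
      · by_cases h2 : m = n
        · simp [h1, h2]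
        · simp only [if_neg h1, if_neg h2, show ¬(m + 1 < n + 1) by omega,
            if_neg, show ¬(m + 1 = n + 1) by omega]
          simp [shift, rename]
          omega

@[simp] theorem subst_var (m n : ℕ) (N : Lam) :
    (var m).subst n N = if m < n then var m else if m = n then N else var (m - 1) := rfl

@[simp] theorem subst_app (M₁ M₂ : Lam) (n : ℕ) (N : Lam) :
    (app M₁ M₂).subst n N = app (M₁.subst n N) (M₂.subst n N) := rfl

@[simp] theorem subst_lam (M : Lam) (n : ℕ) (N : Lam) :
    (lam M).subst n N = lam (M.subst (n + 1) N.shift) := by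
  show lam (M.substAll (liftSub (sMap n N))) = _
  rw [liftSub_sMap]
  rfl

theorem countFree_subst (M : Lam) :
    ∀ n N k, (M.subst n N).countFree k =
      (if k < n then M.countFree k else M.countFree (k + 1)) + M.countFree n * N.countFree k := by
  induction M with
  | var m =>
      intro n N k
      rcases Nat.lt_trichotomy m n with h | h | h
      · rw [subst_var, if_pos h]
        simp only [countFree, if_neg (show m ≠ n by omega), Nat.zero_mul]
        split_ifs <;> omega
      · subst h
        rw [subst_var, if_neg (lt_irrefl m), if_pos rfl]
        simp only [countFree, if_pos rfl, Nat.one_mul]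
        split_ifs <;> omega
      · rw [subst_var, if_neg (show ¬ m < n by omega), if_neg (show m ≠ n by omega)]
        simp only [countFree, if_neg (show m ≠ n by omega), Nat.zero_mul]
        split_ifs <;> omega
  | app M₁ M₂ ih1 ih2 =>
      intro n N k
      rw [subst_app]
      show (M₁.subst n N).countFree k + (M₂.subst n N).countFree k =
        (if k < n then M₁.countFree k + M₂.countFree k
          else M₁.countFree (k + 1) + M₂.countFree (k + 1)) +
        (M₁.countFree n + M₂.countFree n) * N.countFree k
      rw [ih1, ih2, Nat.add_mul]
      split_ifs <;> omega
  | lam M ih =>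
      intro n N k
      rw [subst_lam]
      show (M.subst (n + 1) N.shift).countFree (k + 1) =
        (if k < n then M.countFree (k + 1) else M.countFree (k + 1 + 1)) +
        M.countFree (n + 1) * N.countFree k
      rw [ih, countFree_shift_succ]
      by_cases hk : k < n
      · rw [if_pos hk, if_pos (show k + 1 < n + 1 by omega)]
      · rw [if_neg hk, if_neg (show ¬ k + 1 < n + 1 by omega)]

theorem size_subst (M : Lam) :
    ∀ n N, (M.subst n N).size + M.countFree n = M.size + M.countFree n * N.size := by
  induction M with
  | var m =>
      intro n N
      show (if m < n then var m else if m = n then N else var (m - 1)).size +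
        (if m = n then 1 else 0) = 1 + (if m = n then 1 else 0) * N.size
      rcases Nat.lt_trichotomy m n with h | h | h
      · rw [if_pos h, if_neg (show m ≠ n by omega)]
        show 1 + 0 = 1 + 0 * N.size
        omega
      · subst h
        rw [if_neg (lt_irrefl m), if_pos rfl, if_pos rfl]
        omega
      · rw [if_neg (show ¬ m < n by omega), if_neg (show m ≠ n by omega),
          if_neg (show m ≠ n by omega)]
        show 1 + 0 = 1 + 0 * N.size
        omega
  | app M₁ M₂ ih1 ih2 =>
      intro n N
      have h1 := ih1 n N
      have h2 := ih2 n N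
      rw [subst_app]
      show (M₁.subst n N).size + (M₂.subst n N).size + 1 +
        (M₁.countFree n + M₂.countFree n) =
        M₁.size + M₂.size + 1 + (M₁.countFree n + M₂.countFree n) * N.size
      rw [Nat.add_mul]
      omega
  | lam M ih =>
      intro n N
      have h := ih (n + 1) N.shift
      rw [size_shift] at h
      rw [subst_lam]
      show (M.subst (n + 1) N.shift).size + 1 + M.countFree (n + 1) =
        M.size + 1 + M.countFree (n + 1) * N.size
      omega

theorem linear_rename (M : Lam) :
    ∀ ρ, Function.Injective ρ → M.Linear → (M.rename ρ).Linear := by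
  induction M with
  | var n => intro ρ hρ h; trivial
  | app M₁ M₂ ih1 ih2 =>
      intro ρ hρ h
      obtain ⟨h1, h2, hd⟩ := h
      refine ⟨ih1 ρ hρ h1, ih2 ρ hρ h2, ?_⟩
      intro k
      by_cases hk : ∃ m, ρ m = k
      · obtain ⟨m, rfl⟩ := hk
        rw [countFree_rename_inj _ _ hρ, countFree_rename_inj _ _ hρ]
        exact hd m
      · push_neg at hk
        exact Or.inl (countFree_rename_out _ _ _ hk)
  | lam M ih =>
      intro ρ hρ h
      obtain ⟨h1, h2⟩ := h
      refine ⟨ih _ (liftRen_inj hρ) h1, ?_⟩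
      show (M.rename (liftRen ρ)).countFree (liftRen ρ 0) = 1
      rw [countFree_rename_inj _ _ (liftRen_inj hρ)]
      exact h2

theorem linear_subst (M : Lam) :
    ∀ N n, M.Linear → N.Linear → M.countFree n ≤ 1 →
    (∀ k, (if k < n then M.countFree k else M.countFree (k + 1)) = 0 ∨ N.countFree k = 0) →
    (M.subst n N).Linear := by
  induction M with
  | var m =>
      intro N n _ hN _ _
      show (if m < n then var m else if m = n then N else var (m - 1)).Linear
      rcases Nat.lt_trichotomy m n with h | h | h
      · rw [if_pos h]; trivial
      · subst h; rw [if_neg (lt_irrefl m), if_pos rfl]; exact hN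
      · rw [if_neg (show ¬ m < n by omega), if_neg (show m ≠ n by omega)]; trivial
  | app M₁ M₂ ih1 ih2 =>
      intro N n hM hN hc hD
      obtain ⟨h1, h2, hd⟩ := hM
      simp only [countFree] at hc
      refine ⟨ih1 N n h1 hN (by omega) ?_, ih2 N n h2 hN (by omega) ?_, ?_⟩
      · intro k
        have := hD k
        simp only [countFree] at this
        split at this <;> split <;> omega
      · intro k
        have := hD k
        simp only [countFree] at this
        split at this <;> split <;> omega
      · intro k
        show (M₁.subst n N).countFree k = 0 ∨ (M₂.subst n N).countFree k = 0
        rw [countFree_subst, countFree_subst]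
        have hdn := hd n
        have hDk := hD k
        simp only [countFree] at hDk
        by_cases hk : k < n
        · simp only [if_pos hk] at hDk ⊢
          rcases hDk with hDk | hDk
          · rcases hdn with h0 | h0
            · left; rw [h0]; omega
            · right; rw [h0]; omega
          · rw [hDk]
            rcases hd k with h0 | h0
            · left; omega
            · right; omega
        · simp only [if_neg hk] at hDk ⊢
          rcases hDk with hDk | hDk
          · rcases hdn with h0 | h0
            · left; rw [h0]; omega
            · right; rw [h0]; omega
          · rw [hDk]
            rcases hd (k + 1) with h0 | h0
            · left; omega
            · right; omega
  | lam M ih =>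
      intro N n hM hN hc hD
      obtain ⟨h1, h2⟩ := hM
      simp only [countFree] at hc
      simp only [subst_lam]
      refine ⟨ih N.shift (n + 1) h1 (linear_rename N _ (fun _ _ h => Nat.succ_injective h) hN)
        (by omega) ?_, ?_⟩
      · intro k
        cases k with
        | zero => right; simp
        | succ k =>
            have := hD k
            simp only [countFree] at this
            rw [countFree_shift_succ]
            by_cases hk : k < n
            · simp only [show k + 1 < n + 1 by omega, if_pos] at *
              simp [hk] at this
              exact this
            · simp only [show ¬(k + 1 < n + 1) by omega, if_neg hk, if_neg] at this ⊢
              exact this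
      · show (M.subst (n + 1) N.shift).countFree 0 = 1
        rw [countFree_subst]
        simp [h2]

theorem subst_not_free (M : Lam) :
    ∀ n N, M.countFree n = 0 →
      M.subst n N = M.rename (fun m => if m ≤ n then m else m - 1) := by
  induction M with
  | var m =>
      intro n N h
      simp only [countFree] at h
      have hmn : m ≠ n := by intro e; simp [e] at h
      rcases Nat.lt_trichotomy m n with hl | hl | hl
      · simp [hl, rename, Nat.le_of_lt hl]
      · exact absurd hl hmn
      · simp [show ¬ m < n by omega, hmn, rename, show ¬ m ≤ n by omega]
  | app M₁ M₂ ih1 ih2 =>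
      intro n N h
      simp only [countFree] at h
      simp [rename, ih1 n N (by omega), ih2 n N (by omega)]
  | lam M ih =>
      intro n N h
      simp only [countFree] at h
      simp only [subst_lam, rename, ih (n + 1) N.shift h]
      congr 1
      apply rename_congr
      intro k hk
      cases k with
      | zero => simp [liftRen]
      | succ k =>
          have hkn : k + 1 ≠ n + 1 := by intro e; rw [e] at hk; exact hk h
          simp only [liftRen]
          by_cases hl : k ≤ n
          · simp [hl, show k + 1 ≤ n + 1 by omega]
          · simp [hl, show ¬ k + 1 ≤ n + 1 by omega]
            omega

theorem beta_step {M M' : Lam} (h : Beta M M') (hlin : M.Linear) :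
    M'.Linear ∧ (∀ k, M'.countFree k = M.countFree k) ∧ M'.size < M.size := by
  induction h with
  | beta P N =>
      obtain ⟨⟨linP, hc⟩, linN, hd⟩ := hlin
      have hc' : P.countFree 0 = 1 := hc
      refine ⟨?_, ?_, ?_⟩
      · apply linear_subst P N 0 linP linN (by omega)
        intro k
        simpa [countFree] using hd k
      · intro k
        rw [countFree_subst]
        simp [countFree, hc']
      · have := size_subst P 0 N
        rw [hc'] at this
        simp only [size]
        omega
  | appL N hst ih =>
      obtain ⟨h1, h2, hd⟩ := hlin
      obtain ⟨l', c', s'⟩ := ih h1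
      refine ⟨⟨l', h2, fun k => by rw [c']; exact hd k⟩, ?_, ?_⟩
      · intro k; simp [countFree, c']
      · simp [size]; omega
  | appR M hst ih =>
      obtain ⟨h1, h2, hd⟩ := hlin
      obtain ⟨l', c', s'⟩ := ih h2
      refine ⟨⟨h1, l', fun k => by rw [c']; exact hd k⟩, ?_, ?_⟩
      · intro k; simp [countFree, c']
      · simp [size]; omega
  | lam hst ih =>
      obtain ⟨h1, h2⟩ := hlin
      obtain ⟨l', c', s'⟩ := ih h1
      exact ⟨⟨l', by rw [c']; exact h2⟩, fun k => by simp [countFree, c'], by simp [size]; omega⟩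

end Lam
end LEMPaper

namespace LEMPaper

/-- Function-style typing contexts. -/
def FCtx := ℕ → Option Ty

def noneF : FCtx := fun _ => none

def consF (a : Option Ty) (γ : FCtx) : FCtx := fun n =>
  match n with
  | 0 => a
  | n + 1 => γ n

def tailF (γ : FCtx) : FCtx := fun n => γ (n + 1)

def unionF (γ₁ γ₂ : FCtx) : FCtx := fun n =>
  match γ₁ n with
  | some a => some a
  | none => γ₂ n

/-- Insert an entry at position `n`. -/
def insF (n : ℕ) (a : Option Ty) (γ : FCtx) : FCtx := fun m =>
  if m = n then a else if m < n then γ m else γ (m - 1)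

def SplitF (γ γ₁ γ₂ : FCtx) : Prop :=
  ∀ n, (γ₁ n = γ n ∧ γ₂ n = none) ∨ (γ₂ n = γ n ∧ γ₁ n = none)

/-- Simple (quantifier-free) typing in function contexts. -/
inductive HasTyF : FCtx → Lam → Ty → Prop
  | var {γ n A} : γ n = some A → (∀ m, m ≠ n → γ m = none) → HasTyF γ (.var n) A
  | lam {γ M A B} : HasTyF (consF (some A) γ) M B → HasTyF γ (.lam M) (A.arr B)
  | app {γ γ₁ γ₂ M N A B} : SplitF γ γ₁ γ₂ →
      HasTyF γ₁ M (A.arr B) → HasTyF γ₂ N A → HasTyF γ (.app M N) B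

@[simp] theorem consF_zero (a : Option Ty) (γ : FCtx) : consF a γ 0 = a := rfl
@[simp] theorem consF_succ (a : Option Ty) (γ : FCtx) (n : ℕ) : consF a γ (n + 1) = γ n := rfl
@[simp] theorem tailF_apply (γ : FCtx) (n : ℕ) : tailF γ n = γ (n + 1) := rfl
@[simp] theorem insF_self (n : ℕ) (a : Option Ty) (γ : FCtx) : insF n a γ n = a := by
  simp [insF]

theorem insF_zero (a : Option Ty) (γ : FCtx) : insF 0 a γ = consF a γ := by
  funext m
  cases m with
  | zero => rfl
  | succ m => simp [insF, consF]

theorem insF_succ (n : ℕ) (a : Option Ty) (γ : FCtx) :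
    insF (n + 1) a γ = consF (γ 0) (insF n a (tailF γ)) := by
  funext m
  cases m with
  | zero => simp [insF, consF]
  | succ m =>
      simp only [insF, consF, tailF]
      by_cases h1 : m = n
      · simp [h1]
      · by_cases h2 : m < n
        · simp [h1, h2, show m + 1 ≠ n + 1 by omega, show m + 1 < n + 1 by omega]
        · simp only [if_neg h1, if_neg h2, show ¬ m + 1 = n + 1 by omega, if_false,
            show ¬ m + 1 < n + 1 by omega]
          congr 1
          omega

theorem splitF_comm {γ γ₁ γ₂ : FCtx} (h : SplitF γ γ₁ γ₂) : SplitF γ γ₂ γ₁ :=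
  fun n => (h n).symm

theorem splitF_noneF_right (γ : FCtx) : SplitF γ noneF γ :=
  fun _ => Or.inr ⟨rfl, rfl⟩

theorem splitF_union {γ₁ γ₂ : FCtx} (h : ∀ k, γ₁ k = none ∨ γ₂ k = none) :
    SplitF (unionF γ₁ γ₂) γ₁ γ₂ := by
  intro n
  rcases h n with h0 | h0
  · right
    simp [unionF, h0]
  · rcases e : γ₁ n with _ | a
    · right; simp [unionF, e, h0]
    · left; simp [unionF, e, h0]

theorem splitF_cons {γ γ₁ γ₂ : FCtx} {a : Option Ty} (h : SplitF γ γ₁ γ₂) :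
    SplitF (consF a γ) (consF a γ₁) (consF none γ₂) := by
  intro n
  cases n with
  | zero => left; simp
  | succ n => simpa using h n

theorem splitF_tail {γ γ₁ γ₂ : FCtx} (h : SplitF γ γ₁ γ₂) :
    SplitF (tailF γ) (tailF γ₁) (tailF γ₂) :=
  fun n => h (n + 1)

theorem splitF_insF {γ γ₁ γ₂ : FCtx} (n : ℕ) (a : Option Ty) (h : SplitF γ γ₁ γ₂) :
    SplitF (insF n a γ) (insF n a γ₁) (insF n none γ₂) := by
  intro m
  by_cases hm : m = n
  · subst hm; left; simp
  · simp only [insF, if_neg hm]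
    by_cases h2 : m < n
    · simp only [if_pos h2]; exact h m
    · simp only [if_neg h2]; exact h (m - 1)

/-- A variable is used in a term iff it is available in the context. -/
theorem used_iff {γ : FCtx} {M : Lam} {A : Ty} (h : HasTyF γ M A) :
    ∀ k, γ k = none ↔ M.countFree k = 0 := by
  induction h with
  | @var γ n A h1 h2 =>
      intro k
      by_cases hk : k = n
      · subst hk; simp [h1, Lam.countFree]
      · rw [h2 k hk]
        simp [Lam.countFree, (Ne.symm hk : n ≠ k)]
  | @lam γ M A B h ih =>
      intro k
      have := ih (k + 1)
      simpa [Lam.countFree] using this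
  | @app γ γ₁ γ₂ M N A B hsp h1 h2 ih1 ih2 =>
      intro k
      show γ k = none ↔ M.countFree k + N.countFree k = 0
      rcases hsp k with ⟨e1, e2⟩ | ⟨e1, e2⟩
      · rw [← e1, ih1 k]
        have := (ih2 k).mp e2
        omega
      · rw [← e1, ih2 k]
        have := (ih1 k).mp e2
        omega

/-- Renaming (weakening) for function contexts. -/
theorem hasTyF_rename {γ : FCtx} {M : Lam} {A : Ty} (h : HasTyF γ M A) :
    ∀ (ρ : ℕ → ℕ) (γ' : FCtx), Function.Injective ρ →
      (∀ k, γ' (ρ k) = γ k) → (∀ m, (∀ k, ρ k ≠ m) → γ' m = none) →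
      HasTyF γ' (M.rename ρ) A := by
  induction h with
  | @var γ n A h1 h2 =>
      intro ρ γ' hinj hup hout
      refine HasTyF.var (by rw [hup]; exact h1) ?_
      intro m hm
      by_cases hr : ∃ k, ρ k = m
      · obtain ⟨k, rfl⟩ := hr
        rw [hup]
        exact h2 k (fun e => hm (by rw [e]))
      · push_neg at hr
        exact hout m hr
  | @lam γ M A B h ih =>
      intro ρ γ' hinj hup hout
      refine HasTyF.lam (ih (Lam.liftRen ρ) (consF (some A) γ') (Lam.liftRen_inj hinj) ?_ ?_)
      · intro k
        cases k with
        | zero => rfl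
        | succ k => simpa [Lam.liftRen] using hup k
      · intro m hm
        cases m with
        | zero => exact absurd rfl (hm 0)
        | succ m =>
            show γ' m = none
            apply hout
            intro k e
            exact hm (k + 1) (by simp [Lam.liftRen, e])
  | @app γ γ₁ γ₂ M N A B hsp h1 h2 ih1 ih2 =>
      intro ρ γ' hinj hup hout
      classical
      set δ₁ : FCtx := fun m => if h : ∃ k, ρ k = m then γ₁ h.choose else none with hδ₁
      set δ₂ : FCtx := fun m => if h : ∃ k, ρ k = m then γ₂ h.choose else none with hδ₂
      have key : ∀ (δ : FCtx) (γi : FCtx), δ = (fun m => if h : ∃ k, ρ k = m then γi h.choose else none) →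
          ∀ k, δ (ρ k) = γi k := by
        intro δ γi hδ k
        rw [hδ]
        have he : ∃ j, ρ j = ρ k := ⟨k, rfl⟩
        simp only [dif_pos he]
        rw [hinj he.choose_spec]
      refine HasTyF.app (γ₁ := δ₁) (γ₂ := δ₂) (A := A) ?_ ?_ ?_
      · intro m
        by_cases hr : ∃ k, ρ k = m
        · obtain ⟨k, rfl⟩ := hr
          rw [key δ₁ γ₁ hδ₁ k, key δ₂ γ₂ hδ₂ k, hup k]
          exact hsp k
        · push_neg at hr
          left
          rw [hout m hr, hδ₁, hδ₂]
          constructor <;> simp [dif_neg (by push_neg; exact hr : ¬ ∃ k, ρ k = m)]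
      · exact ih1 ρ δ₁ hinj (key δ₁ γ₁ hδ₁) (fun m hm => by
          rw [hδ₁]; simp [dif_neg (by push_neg; exact hm : ¬ ∃ k, ρ k = m)])
      · exact ih2 ρ δ₂ hinj (key δ₂ γ₂ hδ₂) (fun m hm => by
          rw [hδ₂]; simp [dif_neg (by push_neg; exact hm : ¬ ∃ k, ρ k = m)])

/-- Inverse renaming (strengthening). -/
theorem hasTyF_rename_inv {γ' : FCtx} {Q : Lam} {A : Ty} (h : HasTyF γ' Q A) :
    ∀ (ρ : ℕ → ℕ) (M : Lam), Function.Injective ρ → Q = M.rename ρ →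
      HasTyF (fun k => γ' (ρ k)) M A := by
  induction h with
  | @var γ n A h1 h2 =>
      intro ρ M hinj hQ
      cases M with
      | var m =>
          cases hQ
          exact HasTyF.var h1 (fun k hk => h2 (ρ k) (fun e => hk (hinj e)))
      | app _ _ => simp [Lam.rename] at hQ
      | lam _ => simp [Lam.rename] at hQ
  | @lam γ M A B h ih =>
      intro ρ M₀ hinj hQ
      cases M₀ with
      | var m => simp [Lam.rename] at hQ
      | app _ _ => simp [Lam.rename] at hQ
      | lam M' =>
          simp only [Lam.rename, Lam.lam.injEq] at hQ
          have := ih (Lam.liftRen ρ) M' (Lam.liftRen_inj hinj) hQ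
          refine HasTyF.lam ?_
          have e : (fun k => consF (some A) γ (Lam.liftRen ρ k)) =
              consF (some A) (fun k => γ (ρ k)) := by
            funext k; cases k <;> rfl
          rwa [e] at this
  | @app γ γ₁ γ₂ M N A B hsp h1 h2 ih1 ih2 =>
      intro ρ M₀ hinj hQ
      cases M₀ with
      | var m => simp [Lam.rename] at hQ
      | lam _ => simp [Lam.rename] at hQ
      | app P₁ P₂ =>
          simp only [Lam.rename, Lam.app.injEq] at hQ
          exact HasTyF.app (fun k => hsp (ρ k)) (ih1 ρ P₁ hinj hQ.1) (ih2 ρ P₂ hinj hQ.2)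

theorem hasTyF_tail_shift {γ : FCtx} {N : Lam} {A : Ty} (h : HasTyF γ N.shift A) :
    HasTyF (tailF γ) N A :=
  hasTyF_rename_inv h Nat.succ N (fun _ _ e => Nat.succ_injective e) rfl

end LEMPaper

namespace LEMPaper

theorem tailF_consF (a : Option Ty) (γ : FCtx) : tailF (consF a γ) = γ := rfl

theorem subst_inv_base {δ : FCtx} {N : Lam} {B : Ty} (n : ℕ) (h : HasTyF δ N B) :
    ∃ (A : Ty) (δ₁ δ₂ : FCtx), SplitF δ δ₁ δ₂ ∧
      HasTyF (insF n (some A) δ₁) (Lam.var n) B ∧ HasTyF δ₂ N A := by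
  refine ⟨B, noneF, δ, splitF_noneF_right δ, HasTyF.var (insF_self n _ _) ?_, h⟩
  intro m hm
  simp only [insF, if_neg hm, noneF]
  split_ifs <;> rfl

theorem splitF_reassoc {δ δ₁ δ₂ σ₁ σ₂ : FCtx} (h : SplitF δ δ₁ δ₂) (h' : SplitF δ₁ σ₁ σ₂) :
    SplitF δ (unionF σ₁ δ₂) σ₂ ∧ SplitF (unionF σ₁ δ₂) σ₁ δ₂ := by
  constructor
  · intro n
    rcases h n with ⟨e1, e2⟩ | ⟨e1, e2⟩
    · rcases h' n with ⟨f1, f2⟩ | ⟨f1, f2⟩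
      · left
        refine ⟨?_, f2⟩
        simp only [unionF]
        rcases hs : σ₁ n with _ | a
        · rw [e2, ← e1, ← f1, hs]
        · rw [← e1, ← f1, hs]
      · right
        refine ⟨by rw [f1, e1], ?_⟩
        simp only [unionF]
        rw [f2]
        exact e2
    · have f0 : σ₁ n = none ∧ σ₂ n = none := by
        rcases h' n with ⟨f1, f2⟩ | ⟨f1, f2⟩
        · exact ⟨by rw [f1, e2], f2⟩
        · exact ⟨f2, by rw [f1, e2]⟩
      left
      refine ⟨?_, f0.2⟩
      simp only [unionF]
      rw [f0.1]
      exact e1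
  · intro n
    rcases hs : σ₁ n with _ | a
    · right
      refine ⟨?_, rfl⟩
      simp only [unionF]
      rw [hs]
    · left
      refine ⟨?_, ?_⟩
      · simp only [unionF]
        rw [hs]
      · rcases h' n with ⟨f1, f2⟩ | ⟨f1, f2⟩
        · rcases h n with ⟨e1, e2⟩ | ⟨e1, e2⟩
          · exact e2
          · rw [← f1, hs] at e2
            exact absurd e2 (by simp)
        · rw [hs] at f2
          exact absurd f2 (by simp)

theorem hasTyF_unused (n : ℕ) {δ : FCtx} {M N : Lam} {A : Ty}
    (hM : M.countFree n = 0) (h : HasTyF δ (M.subst n N) A) :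
    HasTyF (insF n none δ) M A := by
  rw [Lam.subst_not_free M n N hM] at h
  have h2 := hasTyF_rename h (fun m => if m < n then m else m + 1) (insF n none δ)
    (fun a b e => by dsimp only at e; split_ifs at e <;> omega)
    (fun k => by
      by_cases hk : k < n
      · simp [insF, hk, show k ≠ n by omega]
      · simp [insF, hk, show ¬ k + 1 < n by omega, show k + 1 ≠ n by omega])
    (fun m hm => by
      have hmn : m = n := by
        by_contra hne
        rcases Nat.lt_or_ge m n with h' | h'
        · exact hm m (by simp [h'])
        · exact hm (m - 1) (by simp only [if_neg (show ¬ m - 1 < n by omega)]; omega)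
      subst hmn
      simp)
  rw [Lam.rename_rename] at h2
  have e : M.rename ((fun m => if m < n then m else m + 1) ∘ fun m => if m ≤ n then m else m - 1)
      = M := by
    rw [Lam.rename_congr M _ id, Lam.rename_id]
    intro k hk
    have hkn : k ≠ n := fun e => hk (e ▸ hM)
    simp only [Function.comp_apply, id_eq]
    split_ifs <;> omega
  rwa [e] at h2

theorem subst_inv {δ : FCtx} {P : Lam} {B : Ty} (h : HasTyF δ P B) :
    ∀ (M N : Lam) (n : ℕ), P = M.subst n N → M.countFree n = 1 →
    ∃ (A : Ty) (δ₁ δ₂ : FCtx), SplitF δ δ₁ δ₂ ∧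
      HasTyF (insF n (some A) δ₁) M B ∧ HasTyF δ₂ N A := by
  induction h with
  | @var γ v A h1 h2 =>
      intro M N n hQ hc
      cases M with
      | var m =>
          by_cases hm : m = n
          · subst hm
            have hN : (Lam.var m).subst m N = N := by
              rw [Lam.subst_var, if_neg (lt_irrefl m), if_pos rfl]
            rw [hN] at hQ
            exact subst_inv_base m (hQ ▸ HasTyF.var h1 h2)
          · exfalso
            simp [Lam.countFree, hm] at hc
      | app M₁ M₂ => rw [Lam.subst_app] at hQ; exact absurd hQ (by simp)
      | lam M₁ => rw [Lam.subst_lam] at hQ; exact absurd hQ (by simp)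
  | @lam γ Q A₀ B₀ hQd ih =>
      intro M N n hQ hc
      cases M with
      | var m =>
          by_cases hm : m = n
          · subst hm
            have hN : (Lam.var m).subst m N = N := by
              rw [Lam.subst_var, if_neg (lt_irrefl m), if_pos rfl]
            rw [hN] at hQ
            exact subst_inv_base m (hQ ▸ HasTyF.lam hQd)
          · exfalso
            simp [Lam.countFree, hm] at hc
      | app M₁ M₂ => rw [Lam.subst_app] at hQ; exact absurd hQ (by simp)
      | lam M' =>
          rw [Lam.subst_lam] at hQ
          have hQ' : Q = M'.subst (n + 1) N.shift := by injection hQ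
          have hc' : M'.countFree (n + 1) = 1 := hc
          obtain ⟨A, σ₁, σ₂, hsp, hM', hNs⟩ := ih M' N.shift (n + 1) hQ' hc'
          have hσ₂0 : σ₂ 0 = none := (used_iff hNs 0).mpr (Lam.countFree_shift_zero N)
          have hσ₁0 : σ₁ 0 = some A₀ := by
            rcases hsp 0 with ⟨e1, _⟩ | ⟨e1, _⟩
            · rw [e1]; rfl
            · rw [hσ₂0] at e1
              exact absurd e1.symm (by simp [consF])
          have hspt := splitF_tail hsp
          rw [tailF_consF] at hspt
          refine ⟨A, tailF σ₁, tailF σ₂, hspt, ?_, hasTyF_tail_shift hNs⟩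
          rw [insF_succ, hσ₁0] at hM'
          exact HasTyF.lam hM'
  | @app γ γ₁ γ₂ P₁ P₂ A₀ B₀ hsp h1 h2 ih1 ih2 =>
      intro M N n hQ hc
      cases M with
      | var m =>
          by_cases hm : m = n
          · subst hm
            have hN : (Lam.var m).subst m N = N := by
              rw [Lam.subst_var, if_neg (lt_irrefl m), if_pos rfl]
            rw [hN] at hQ
            exact subst_inv_base m (hQ ▸ HasTyF.app hsp h1 h2)
          · exfalso
            simp [Lam.countFree, hm] at hc
      | lam M' => rw [Lam.subst_lam] at hQ; exact absurd hQ (by simp)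
      | app M₁ M₂ =>
          rw [Lam.subst_app] at hQ
          injection hQ with e1 e2
          have hcc : M₁.countFree n + M₂.countFree n = 1 := hc
          rcases (show M₁.countFree n = 1 ∧ M₂.countFree n = 0 ∨
              M₁.countFree n = 0 ∧ M₂.countFree n = 1 by omega) with ⟨ha, hb⟩ | ⟨ha, hb⟩
          · obtain ⟨A, σ₁, σ₂, hsp', hM₁, hN⟩ := ih1 M₁ N n e1 ha
            have hM₂ : HasTyF (insF n none γ₂) M₂ A₀ := hasTyF_unused n hb (e2 ▸ h2)
            obtain ⟨hs1, hs2⟩ := splitF_reassoc hsp hsp'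
            exact ⟨A, unionF σ₁ γ₂, σ₂, hs1,
              HasTyF.app (splitF_insF n (some A) hs2) hM₁ hM₂, hN⟩
          · obtain ⟨A, σ₁, σ₂, hsp', hM₂, hN⟩ := ih2 M₂ N n e2 hb
            have hM₁ : HasTyF (insF n none γ₁) M₁ (A₀.arr B₀) := hasTyF_unused n ha (e1 ▸ h1)
            obtain ⟨hs1, hs2⟩ := splitF_reassoc (splitF_comm hsp) hsp'
            exact ⟨A, unionF σ₁ γ₁, σ₂, hs1,
              HasTyF.app (splitF_comm (splitF_insF n (some A) hs2)) hM₁ hM₂, hN⟩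

theorem expand {M M' : Lam} (h : Lam.Beta M M') (hlin : M.Linear) :
    ∀ {γ : FCtx} {A : Ty}, HasTyF γ M' A → HasTyF γ M A := by
  induction h with
  | beta P N =>
      intro γ B h
      obtain ⟨⟨linP, hc⟩, linN, hd⟩ := hlin
      obtain ⟨A, δ₁, δ₂, hsp, hP, hN⟩ := subst_inv h P N 0 rfl hc
      rw [insF_zero] at hP
      exact HasTyF.app hsp (HasTyF.lam hP) hN
  | appL N hst ih =>
      intro γ A h
      cases h with
      | app hsp h1 h2 => exact HasTyF.app hsp (ih hlin.1 h1) h2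
  | appR M hst ih =>
      intro γ A h
      cases h with
      | app hsp h1 h2 => exact HasTyF.app hsp h1 (ih hlin.2.1 h2)
  | lam hst ih =>
      intro γ A h
      cases h with
      | lam h1 => exact HasTyF.lam (ih hlin.1 h1)

end LEMPaper

namespace LEMPaper

/-- Quantifier-free types. -/
def Qf : Ty → Prop
  | .var _ => True
  | .arr A B => Qf A ∧ Qf B
  | .all _ => False

def CtxQf (γ : FCtx) : Prop := ∀ k T, γ k = some T → Qf T

def NormalB (M : Lam) : Prop := ∀ W, ¬ Lam.Beta M W

theorem normalB_appL {M N : Lam} (h : NormalB (.app M N)) : NormalB M :=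
  fun W hw => h _ (Lam.Beta.appL N hw)

theorem normalB_appR {M N : Lam} (h : NormalB (.app M N)) : NormalB N :=
  fun W hw => h _ (Lam.Beta.appR M hw)

theorem normalB_app_not_lam {M N : Lam} (h : NormalB (.app M N)) :
    ∀ P, M ≠ Lam.lam P := by
  intro P e
  subst e
  exact h _ (Lam.Beta.beta P N)

theorem normalB_lam {M : Lam} (h : NormalB (.lam M)) : NormalB M :=
  fun W hw => h _ (Lam.Beta.lam hw)

theorem normal_typing : ∀ (s : ℕ) (M : Lam), M.size ≤ s → NormalB M → M.Linear →
    ((∀ B, Qf B → (∀ P, M ≠ Lam.lam P) → ∃ γ, HasTyF γ M B ∧ CtxQf γ) ∧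
     (∃ γ A, HasTyF γ M A ∧ Qf A ∧ CtxQf γ)) := by
  intro s
  induction s using Nat.strong_induction_on with
  | _ s IH =>
  intro M hs hnf hlin
  cases M with
  | var n =>
      have key : ∀ B, Qf B → ∃ γ, HasTyF γ (Lam.var n) B ∧ CtxQf γ := by
        intro B hB
        refine ⟨fun m => if m = n then some B else none,
          HasTyF.var (by simp) (fun m hm => by simp [hm]), ?_⟩
        intro k T hT
        dsimp only at hT
        by_cases hk : k = n
        · rw [if_pos hk] at hT
          injection hT with e
          exact e ▸ hB
        · rw [if_neg hk] at hT
          exact absurd hT (by simp)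
      refine ⟨fun B hB _ => key B hB, ?_⟩
      obtain ⟨γ, h, hc⟩ := key (Ty.var 0) trivial
      exact ⟨γ, Ty.var 0, h, trivial, hc⟩
  | lam M' =>
      constructor
      · intro B hB hne
        exact absurd rfl (hne M')
      · obtain ⟨hl', hc1⟩ := hlin
        have hs' : M'.size + 1 ≤ s := hs
        obtain ⟨_, γ', A', hM', hQf', hCtx'⟩ :=
          IH (s - 1) (by omega) M' (by omega) (normalB_lam hnf) hl'
        have h0 : γ' 0 ≠ none := fun e => by
          have := (used_iff hM' 0).mp e
          omega
        rcases e0 : γ' 0 with _ | A₀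
        · exact absurd e0 h0
        have hγ : γ' = consF (some A₀) (tailF γ') := by
          funext k
          cases k with
          | zero => exact e0
          | succ k => rfl
        rw [hγ] at hM'
        exact ⟨tailF γ', A₀.arr A', HasTyF.lam hM', ⟨hCtx' 0 A₀ e0, hQf'⟩,
          fun k T hT => hCtx' (k + 1) T hT⟩
  | app M₁ M₂ =>
      obtain ⟨l1, l2, hd⟩ := hlin
      have hs' : M₁.size + M₂.size + 1 ≤ s := hs
      have key : ∀ B, Qf B → ∃ γ, HasTyF γ (Lam.app M₁ M₂) B ∧ CtxQf γ := by
        intro B hB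
        obtain ⟨_, γ₂, A, hN, hA, hC2⟩ :=
          IH (s - 1) (by omega) M₂ (by have := Lam.size_pos M₁; omega) (normalB_appR hnf) l2
        obtain ⟨hq, _⟩ :=
          IH (s - 1) (by omega) M₁ (by have := Lam.size_pos M₂; omega) (normalB_appL hnf) l1
        obtain ⟨γ₁, hM, hC1⟩ := hq (A.arr B) ⟨hA, hB⟩ (normalB_app_not_lam hnf)
        have hdisj : ∀ k, γ₁ k = none ∨ γ₂ k = none := by
          intro k
          rcases hd k with h0 | h0
          · exact Or.inl ((used_iff hM k).mpr h0)
          · exact Or.inr ((used_iff hN k).mpr h0)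
        refine ⟨unionF γ₁ γ₂, HasTyF.app (splitF_union hdisj) hM hN, ?_⟩
        intro k T hT
        simp only [unionF] at hT
        rcases e : γ₁ k with _ | a
        · rw [e] at hT
          exact hC2 k T hT
        · rw [e] at hT
          injection hT with e'
          exact e' ▸ hC1 k a e
      refine ⟨fun B hB _ => key B hB, ?_⟩
      obtain ⟨γ, h, hc⟩ := key (Ty.var 0) trivial
      exact ⟨γ, Ty.var 0, h, trivial, hc⟩

theorem closed_typing : ∀ (s : ℕ) (M : Lam), M.size ≤ s → M.Linear → M.Closed →
    ∃ A, Qf A ∧ HasTyF noneF M A := by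
  intro s
  induction s using Nat.strong_induction_on with
  | _ s IH =>
  intro M hs hlin hcl
  by_cases hstep : ∃ M', Lam.Beta M M'
  · obtain ⟨M', st⟩ := hstep
    obtain ⟨l', c', s'⟩ := Lam.beta_step st hlin
    obtain ⟨A, hA, h⟩ := IH (s - 1) (by have := Lam.size_pos M; omega) M' (by omega) l'
      (fun n => by rw [c' n]; exact hcl n)
    exact ⟨A, hA, expand st hlin h⟩
  · push_neg at hstep
    obtain ⟨_, γ, A, h, hA, _⟩ := normal_typing s M hs (fun W hw => hstep W hw) hlin
    have hγ : γ = noneF := funext fun k => (used_iff h k).mpr (hcl k)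
    rw [hγ] at h
    exact ⟨A, hA, h⟩

theorem splitF_toList : ∀ (Γ : Ctx) (γ γ₁ γ₂ : FCtx),
    (∀ n, (Γ[n]?).getD none = γ n) → SplitF γ γ₁ γ₂ →
    ∃ Γ₁ Γ₂, Split Γ Γ₁ Γ₂ ∧ (∀ n, (Γ₁[n]?).getD none = γ₁ n) ∧
      (∀ n, (Γ₂[n]?).getD none = γ₂ n) := by
  intro Γ
  induction Γ with
  | nil =>
      intro γ γ₁ γ₂ hrep hsp
      have h0 : ∀ n, γ n = none := fun n => by rw [← hrep n]; simp
      have h1 : ∀ n, γ₁ n = none ∧ γ₂ n = none := by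
        intro n
        rcases hsp n with ⟨e1, e2⟩ | ⟨e1, e2⟩
        · exact ⟨by rw [e1, h0], e2⟩
        · exact ⟨e2, by rw [e1, h0]⟩
      exact ⟨[], [], Split.nil, fun n => by simp [(h1 n).1], fun n => by simp [(h1 n).2]⟩
  | cons a Γ ih =>
      intro γ γ₁ γ₂ hrep hsp
      have hrt : ∀ n, (Γ[n]?).getD none = tailF γ n := fun n => by
        have := hrep (n + 1)
        simpa using this
      obtain ⟨Γ₁, Γ₂, hsp', h1, h2⟩ := ih (tailF γ) (tailF γ₁) (tailF γ₂) hrt (splitF_tail hsp)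
      have h0 : γ 0 = a := by
        have := hrep 0
        simpa using this.symm
      cases a with
      | none =>
          have hb : γ₁ 0 = none ∧ γ₂ 0 = none := by
            rcases hsp 0 with ⟨e1, e2⟩ | ⟨e1, e2⟩
            · exact ⟨by rw [e1, h0], e2⟩
            · exact ⟨e2, by rw [e1, h0]⟩
          refine ⟨none :: Γ₁, none :: Γ₂, Split.skip hsp', ?_, ?_⟩ <;> intro n <;> cases n
          · simpa using hb.1.symm
          · simpa using h1 _
          · simpa using hb.2.symm
          · simpa using h2 _
      | some A =>
          rcases hsp 0 with ⟨e1, e2⟩ | ⟨e1, e2⟩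
          · have e1' : γ₁ 0 = some A := by rw [e1, h0]
            refine ⟨some A :: Γ₁, none :: Γ₂, Split.left hsp', ?_, ?_⟩ <;> intro n <;> cases n
            · simpa using e1'.symm
            · simpa using h1 _
            · simpa using e2.symm
            · simpa using h2 _
          · have e1' : γ₂ 0 = some A := by rw [e1, h0]
            refine ⟨none :: Γ₁, some A :: Γ₂, Split.right hsp', ?_, ?_⟩ <;> intro n <;> cases n
            · simpa using e2.symm
            · simpa using h1 _
            · simpa using e1'.symm
            · simpa using h2 _

theorem toListTy {γ : FCtx} {M : Lam} {A : Ty} (h : HasTyF γ M A) :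
    ∀ Γ : Ctx, (∀ n, (Γ[n]?).getD none = γ n) → HasTy Γ M A := by
  induction h with
  | @var γ n A h1 h2 =>
      intro Γ hrep
      refine HasTy.var ⟨?_, ?_⟩
      · have := hrep n
        rw [h1] at this
        rcases e : Γ[n]? with _ | b
        · rw [e] at this
          exact absurd this (by simp)
        · rw [e] at this
          simp only [Option.getD_some] at this
          rw [this]
      · intro m hm B e
        have := hrep m
        rw [h2 m hm, e] at this
        exact absurd this (by simp)
  | @lam γ M A B hd ih =>
      intro Γ hrep
      refine HasTy.lam (ih (some A :: Γ) ?_)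
      intro n
      cases n with
      | zero => simp [consF]
      | succ n => simpa using hrep n
  | @app γ γ₁ γ₂ M N A B hsp hd1 hd2 ih1 ih2 =>
      intro Γ hrep
      obtain ⟨Γ₁, Γ₂, hs, r1, r2⟩ := splitF_toList Γ _ _ _ hrep hsp
      exact HasTy.app hs (ih1 Γ₁ r1) (ih2 Γ₂ r2)

theorem ty_closedAt_mono : ∀ (A : Ty) {d d' : ℕ}, d ≤ d' → A.ClosedAt d → A.ClosedAt d' := by
  intro A
  induction A with
  | var n => intro d d' h hc; exact lt_of_lt_of_le hc h
  | arr A B ihA ihB => intro d d' h hc; exact ⟨ihA h hc.1, ihB h hc.2⟩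
  | all A ih => intro d d' h hc; exact ih (by omega) hc

theorem ty_closedAt_exists : ∀ A : Ty, ∃ d, A.ClosedAt d := by
  intro A
  induction A with
  | var n => exact ⟨n + 1, Nat.lt_succ_self n⟩
  | arr A B ihA ihB =>
      obtain ⟨d1, h1⟩ := ihA
      obtain ⟨d2, h2⟩ := ihB
      exact ⟨max d1 d2, ty_closedAt_mono A (le_max_left _ _) h1,
        ty_closedAt_mono B (le_max_right _ _) h2⟩
  | all A ih =>
      obtain ⟨d, h⟩ := ih
      exact ⟨d, ty_closedAt_mono A (by omega) h⟩

/-- Iterated universal closure. -/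
def closeN : ℕ → Ty → Ty
  | 0, A => A
  | d + 1, A => .all (closeN d A)

theorem closeN_closedAt : ∀ (d : ℕ) (A : Ty) (k : ℕ),
    A.ClosedAt (d + k) → (closeN d A).ClosedAt k := by
  intro d
  induction d with
  | zero => intro A k h; simpa [closeN] using h
  | succ d ih =>
      intro A k h
      show (closeN d A).ClosedAt (k + 1)
      exact ih A (k + 1) (by rw [show d + (k + 1) = d + 1 + k by omega]; exact h)

theorem qf_pisigma : ∀ (A : Ty), Qf A → ∀ b, A.isPiSigma b := by
  intro A
  induction A with
  | var n => intro _ _; trivial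
  | arr A B ihA ihB => intro h b; exact ⟨ihA h.1 _, ihB h.2 _⟩
  | all A ih => intro h; exact absurd h (by simp [Qf])

theorem closeN_pi : ∀ (d : ℕ) (A : Ty), A.isPiSigma true → (closeN d A).isPiSigma true := by
  intro d
  induction d with
  | zero => intro A h; exact h
  | succ d ih => intro A h; exact ⟨rfl, ih A h⟩

theorem hasTy_closeN : ∀ (d : ℕ) {M : Lam} {A : Ty}, HasTy [] M A → HasTy [] M (closeN d A) := by
  intro d
  induction d with
  | zero => intro M A h; exact h
  | succ d ih => intro M A h; exact HasTy.allI (ih h)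

end LEMPaper


namespace LEMPaper

/-- Fact 2.1: every closed linear λ-term has a ground type in `IMLL₂`,
i.e. there is a closed `Π₁`-type `A` with `⊢ M : A` derivable. -/
theorem closed_linear_term_has_ground_type
    (M : Lam) (hlin : M.Linear) (hcl : M.Closed) :
    ∃ A : Ty, Ty.Ground A ∧ HasTy [] M A := by
  obtain ⟨A, hA, hF⟩ := closed_typing M.size M le_rfl hlin hcl
  have hT : HasTy [] M A := toListTy hF [] (fun n => by simp [noneF])
  obtain ⟨d, hd⟩ := ty_closedAt_exists A
  exact ⟨closeN d A, ⟨closeN_pi d A (qf_pisigma A hA true),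
    closeN_closedAt d A 0 (by simpa using hd)⟩, hasTy_closeN d hT⟩

end LEMPaper
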